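/- For every positive integer n, 𝒮_8(n) is full; that is, every integer T with T ≡ n (mod 2) and T² < 8n satisfies T ∈ 𝒮_8(n). -/
import Mathlib


/-- `S m n` is the set of integers `T` such that there exist integers
`x₁,…,x_m` with `x₁+⋯+x_m = T` and `x₁²+⋯+x_m² = n`. -/
def S (m n : ℕ) : Set ℤ :=
  {T : ℤ | ∃ x : Fin m → ℤ, (∑ i, x i) = T ∧ (∑ i, (x i) ^ 2) = (n : ℤ)}

/-- `sos m` is the set of integers expressible as a sum of `m` squares of integers. -/
def sos (m : ℕ) : Set ℤ :=
  {n : ℤ | ∃ a : Fin m → ℤ, (∑ i, (a i) ^ 2) = n}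

/-- The binary quadratic form `aX² + 2hXY + bY²` is a sum of `m` squares of
integral linear forms. -/
def IsSumSqLin (m : ℕ) (a h b : ℤ) : Prop :=
  ∃ α β : Fin m → ℤ,
    (∑ i, (α i) ^ 2) = a ∧ (∑ i, α i * β i) = h ∧ (∑ i, (β i) ^ 2) = b

/-- `S m n` is full: every `T` with `T ≡ n (mod 2)` and `T² < mn` lies in `S m n`. -/
def Sfull (m n : ℕ) : Prop :=
  ∀ T : ℤ, T % 2 = (n : ℤ) % 2 → T ^ 2 < (m : ℤ) * n → T ∈ S m n

/-- Lagrange's four-square theorem over the integers. -/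
lemma int_four_squares (N : ℤ) (h : 0 ≤ N) :
    ∃ a b c d : ℤ, a ^ 2 + b ^ 2 + c ^ 2 + d ^ 2 = N := by
  obtain ⟨a, b, c, d, h4⟩ := Nat.sum_four_squares N.toNat
  refine ⟨a, b, c, d, ?_⟩
  have := congrArg (Nat.cast : ℕ → ℤ) h4
  push_cast at this
  rw [Int.toNat_of_nonneg h] at this
  exact this

lemma sq_decomp (x : ℤ) :
    ∃ s e : ℤ, x ^ 2 = 4 * s + e ∧
      ((e = 0 ∧ ∃ u, x = 2 * u ∧ s = u * u) ∨
       (e = 1 ∧ ∃ u, x = 2 * u + 1 ∧ s = u * u + u)) := by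
  rcases Int.even_or_odd x with ⟨m, hm⟩ | ⟨m, hm⟩
  · exact ⟨m * m, 0, by subst hm; ring, Or.inl ⟨rfl, m, by omega, rfl⟩⟩
  · exact ⟨m * m + m, 1, by subst hm; ring, Or.inr ⟨rfl, m, hm, rfl⟩⟩

/-- Every nonnegative integer is of the form `a² + b² + c² + d(d-1)`. -/
lemma lemA (N : ℤ) (h : 0 ≤ N) :
    ∃ a b c d : ℤ, a ^ 2 + b ^ 2 + c ^ 2 + d * (d - 1) = N := by
  obtain ⟨a, b, c, d, h4⟩ := int_four_squares (4 * N + 1) (by omega)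
  obtain ⟨sa, ea, hA, ha⟩ := sq_decomp a
  obtain ⟨sb, eb, hB, hb⟩ := sq_decomp b
  obtain ⟨sc, ec, hC, hc⟩ := sq_decomp c
  obtain ⟨sd, ed, hD, hd⟩ := sq_decomp d
  rw [hA, hB, hC, hD] at h4
  rcases ha with ⟨hea, ua, _, hsa⟩ | ⟨hea, ua, _, hsa⟩ <;>
  rcases hb with ⟨heb, ub, _, hsb⟩ | ⟨heb, ub, _, hsb⟩ <;>
  rcases hc with ⟨hec, uc, _, hsc⟩ | ⟨hec, uc, _, hsc⟩ <;>
  rcases hd with ⟨hed, ud, _, hsd⟩ | ⟨hed, ud, _, hsd⟩ <;>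
    subst hea heb hec hed hsa hsb hsc hsd
  -- the 12 cases where the number of odd entries is not 1 are impossible mod 4
  all_goals try (
    exfalso
    obtain ⟨Pa, hPa⟩ : ∃ P, ua * ua = P := ⟨_, rfl⟩
    obtain ⟨Pb, hPb⟩ : ∃ P, ub * ub = P := ⟨_, rfl⟩
    obtain ⟨Pc, hPc⟩ : ∃ P, uc * uc = P := ⟨_, rfl⟩
    obtain ⟨Pd, hPd⟩ : ∃ P, ud * ud = P := ⟨_, rfl⟩
    rw [hPa, hPb, hPc, hPd] at h4; omega)
  · -- d odd
    refine ⟨ua, ub, uc, ud + 1, ?_⟩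
    have h5 : 4 * (ua ^ 2 + ub ^ 2 + uc ^ 2 + (ud + 1) * ((ud + 1) - 1)) = 4 * N := by
      linear_combination h4
    linarith
  · -- c odd
    refine ⟨ua, ub, ud, uc + 1, ?_⟩
    have h5 : 4 * (ua ^ 2 + ub ^ 2 + ud ^ 2 + (uc + 1) * ((uc + 1) - 1)) = 4 * N := by
      linear_combination h4
    linarith
  · -- b odd
    refine ⟨ua, uc, ud, ub + 1, ?_⟩
    have h5 : 4 * (ua ^ 2 + uc ^ 2 + ud ^ 2 + (ub + 1) * ((ub + 1) - 1)) = 4 * N := by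
      linear_combination h4
    linarith
  · -- a odd
    refine ⟨ub, uc, ud, ua + 1, ?_⟩
    have h5 : 4 * (ub ^ 2 + uc ^ 2 + ud ^ 2 + (ua + 1) * ((ua + 1) - 1)) = 4 * N := by
      linear_combination h4
    linarith

/-- Membership in `S 8 n` for even sums via the pairing construction. -/
lemma mem_S8_even (n : ℕ) (y₁ y₂ y₃ y₄ n' : ℤ) (hn : (n : ℤ) = 2 * n')
    (hle : y₁ ^ 2 + y₂ ^ 2 + y₃ ^ 2 + y₄ ^ 2 ≤ n') :
    (2 * (y₁ + y₂ + y₃ + y₄)) ∈ S 8 n := by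
  obtain ⟨a, b, c, d, hz⟩ :=
    int_four_squares (n' - (y₁ ^ 2 + y₂ ^ 2 + y₃ ^ 2 + y₄ ^ 2)) (by omega)
  refine ⟨![y₁ + a, y₁ - a, y₂ + b, y₂ - b, y₃ + c, y₃ - c, y₄ + d, y₄ - d], ?_, ?_⟩
  · simp [Fin.sum_univ_succ, Matrix.cons_val_zero, Matrix.cons_val_succ]; ring
  · simp [Fin.sum_univ_succ, Matrix.cons_val_zero, Matrix.cons_val_succ]
    linear_combination 2 * hz - hn

/-- Membership in `S 8 n` for odd sums via the pairing construction with one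
asymmetric pair. -/
lemma mem_S8_odd (n : ℕ) (y₁ y₂ y₃ y₄ n₁ : ℤ) (hn : (n : ℤ) = 2 * n₁ + 1)
    (hle : y₁ ^ 2 + y₂ ^ 2 + y₃ ^ 2 + y₄ ^ 2 + y₄ ≤ n₁) :
    (2 * (y₁ + y₂ + y₃ + y₄) + 1) ∈ S 8 n := by
  obtain ⟨a, b, c, d, hz⟩ :=
    lemA (n₁ - (y₁ ^ 2 + y₂ ^ 2 + y₃ ^ 2 + y₄ ^ 2 + y₄)) (by omega)
  refine ⟨![y₁ + a, y₁ - a, y₂ + b, y₂ - b, y₃ + c, y₃ - c, y₄ + d, y₄ + 1 - d], ?_, ?_⟩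
  · simp [Fin.sum_univ_succ, Matrix.cons_val_zero, Matrix.cons_val_succ]; ring
  · simp [Fin.sum_univ_succ, Matrix.cons_val_zero, Matrix.cons_val_succ]
    linear_combination 2 * hz - hn

lemma main8 (n : ℕ) (T : ℤ) (hpar : T % 2 = (n : ℤ) % 2)
    (hlt : T ^ 2 < 8 * (n : ℤ)) : T ∈ S 8 n := by
  rcases Int.even_or_odd T with ⟨T', hT⟩ | ⟨t, hT⟩
  · -- even case: T = 2T', n = 2n'
    have hT2 : T = 2 * T' := by omega
    clear hT
    subst hT2
    obtain ⟨n', hn'⟩ : ∃ n', (n : ℤ) = 2 * n' := ⟨(n : ℤ) / 2, by omega⟩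
    rw [hn'] at hlt
    obtain ⟨q, r, hqr, hr0, hr4⟩ :
        ∃ q r, T' = 4 * q + r ∧ 0 ≤ r ∧ r < 4 :=
      ⟨T' / 4, T' % 4, by omega, by omega, by omega⟩
    obtain ⟨s, hs⟩ : ∃ s, q * q = s := ⟨_, rfl⟩
    interval_cases r <;> subst hqr
    · -- r = 0 : y = (q,q,q,q)
      have e1 : (2 * (4 * q + 0)) ^ 2 = 64 * s := by rw [← hs]; ring
      have h2 : 64 * s < 16 * n' := by linarith [e1, hlt]
      have hle : q ^ 2 + q ^ 2 + q ^ 2 + q ^ 2 ≤ n' := by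
        have e2 : q ^ 2 + q ^ 2 + q ^ 2 + q ^ 2 = 4 * s := by rw [← hs]; ring
        rw [e2]; omega
      rw [show (2 * (4 * q + 0) : ℤ) = 2 * (q + q + q + q) from by ring]
      exact mem_S8_even n q q q q n' hn' hle
    · -- r = 1 : y = (q+1,q,q,q)
      have e1 : (2 * (4 * q + 1)) ^ 2 = 64 * s + 32 * q + 4 := by rw [← hs]; ring
      have h2 : 64 * s + 32 * q + 4 < 16 * n' := by linarith [e1, hlt]
      have hle : (q + 1) ^ 2 + q ^ 2 + q ^ 2 + q ^ 2 ≤ n' := by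
        have e2 : (q + 1) ^ 2 + q ^ 2 + q ^ 2 + q ^ 2 = 4 * s + 2 * q + 1 := by
          rw [← hs]; ring
        rw [e2]; omega
      rw [show (2 * (4 * q + 1) : ℤ) = 2 * ((q + 1) + q + q + q) from by ring]
      exact mem_S8_even n (q + 1) q q q n' hn' hle
    · -- r = 2 : y = (q+1,q+1,q,q)
      have e1 : (2 * (4 * q + 2)) ^ 2 = 64 * s + 64 * q + 16 := by rw [← hs]; ring
      have h2 : 64 * s + 64 * q + 16 < 16 * n' := by linarith [e1, hlt]
      have hle : (q + 1) ^ 2 + (q + 1) ^ 2 + q ^ 2 + q ^ 2 ≤ n' := by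
        have e2 : (q + 1) ^ 2 + (q + 1) ^ 2 + q ^ 2 + q ^ 2 = 4 * s + 4 * q + 2 := by
          rw [← hs]; ring
        rw [e2]; omega
      rw [show (2 * (4 * q + 2) : ℤ) = 2 * ((q + 1) + (q + 1) + q + q) from by ring]
      exact mem_S8_even n (q + 1) (q + 1) q q n' hn' hle
    · -- r = 3 : y = (q+1,q+1,q+1,q)
      have e1 : (2 * (4 * q + 3)) ^ 2 = 64 * s + 96 * q + 36 := by rw [← hs]; ring
      have h2 : 64 * s + 96 * q + 36 < 16 * n' := by linarith [e1, hlt]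
      have hle : (q + 1) ^ 2 + (q + 1) ^ 2 + (q + 1) ^ 2 + q ^ 2 ≤ n' := by
        have e2 : (q + 1) ^ 2 + (q + 1) ^ 2 + (q + 1) ^ 2 + q ^ 2 = 4 * s + 6 * q + 3 := by
          rw [← hs]; ring
        rw [e2]; omega
      rw [show (2 * (4 * q + 3) : ℤ) = 2 * ((q + 1) + (q + 1) + (q + 1) + q) from by ring]
      exact mem_S8_even n (q + 1) (q + 1) (q + 1) q n' hn' hle
  · -- odd case: T = 2t+1, n = 2n₁+1
    subst hT
    obtain ⟨n₁, hn₁⟩ : ∃ n₁, (n : ℤ) = 2 * n₁ + 1 := ⟨((n : ℤ) - 1) / 2, by omega⟩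
    rw [hn₁] at hlt
    obtain ⟨q, r, hqr, hr0, hr4⟩ :
        ∃ q r, t = 4 * q + r ∧ 0 ≤ r ∧ r < 4 :=
      ⟨t / 4, t % 4, by omega, by omega, by omega⟩
    obtain ⟨s, hs⟩ : ∃ s, q * q = s := ⟨_, rfl⟩
    interval_cases r <;> subst hqr
    · -- r = 0 : y = (q,q,q,q)
      have e1 : (2 * (4 * q + 0) + 1) ^ 2 = 64 * s + 16 * q + 1 := by rw [← hs]; ring
      have h2 : 64 * s + 16 * q + 1 < 16 * n₁ + 8 := by linarith [e1, hlt]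
      have hle : q ^ 2 + q ^ 2 + q ^ 2 + q ^ 2 + q ≤ n₁ := by
        have e2 : q ^ 2 + q ^ 2 + q ^ 2 + q ^ 2 + q = 4 * s + q := by rw [← hs]; ring
        rw [e2]; omega
      rw [show (2 * (4 * q + 0) + 1 : ℤ) = 2 * (q + q + q + q) + 1 from by ring]
      exact mem_S8_odd n q q q q n₁ hn₁ hle
    · -- r = 1 : y = (q+1,q,q,q)
      have e1 : (2 * (4 * q + 1) + 1) ^ 2 = 64 * s + 48 * q + 9 := by rw [← hs]; ring
      have h2 : 64 * s + 48 * q + 9 < 16 * n₁ + 8 := by linarith [e1, hlt]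
      have hle : (q + 1) ^ 2 + q ^ 2 + q ^ 2 + q ^ 2 + q ≤ n₁ := by
        have e2 : (q + 1) ^ 2 + q ^ 2 + q ^ 2 + q ^ 2 + q = 4 * s + 3 * q + 1 := by
          rw [← hs]; ring
        rw [e2]; omega
      rw [show (2 * (4 * q + 1) + 1 : ℤ) = 2 * ((q + 1) + q + q + q) + 1 from by ring]
      exact mem_S8_odd n (q + 1) q q q n₁ hn₁ hle
    · -- r = 2 : y = (q+1,q+1,q,q)
      have e1 : (2 * (4 * q + 2) + 1) ^ 2 = 64 * s + 80 * q + 25 := by rw [← hs]; ring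
      have h2 : 64 * s + 80 * q + 25 < 16 * n₁ + 8 := by linarith [e1, hlt]
      have hle : (q + 1) ^ 2 + (q + 1) ^ 2 + q ^ 2 + q ^ 2 + q ≤ n₁ := by
        have e2 : (q + 1) ^ 2 + (q + 1) ^ 2 + q ^ 2 + q ^ 2 + q = 4 * s + 5 * q + 2 := by
          rw [← hs]; ring
        rw [e2]; omega
      rw [show (2 * (4 * q + 2) + 1 : ℤ) = 2 * ((q + 1) + (q + 1) + q + q) + 1 from by ring]
      exact mem_S8_odd n (q + 1) (q + 1) q q n₁ hn₁ hle
    · -- r = 3 : y = (q+1,q+1,q+1,q)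
      have e1 : (2 * (4 * q + 3) + 1) ^ 2 = 64 * s + 112 * q + 49 := by rw [← hs]; ring
      have h2 : 64 * s + 112 * q + 49 < 16 * n₁ + 8 := by linarith [e1, hlt]
      have hle : (q + 1) ^ 2 + (q + 1) ^ 2 + (q + 1) ^ 2 + q ^ 2 + q ≤ n₁ := by
        have e2 : (q + 1) ^ 2 + (q + 1) ^ 2 + (q + 1) ^ 2 + q ^ 2 + q = 4 * s + 7 * q + 3 := by
          rw [← hs]; ring
        rw [e2]; omega
      rw [show (2 * (4 * q + 3) + 1 : ℤ) = 2 * ((q + 1) + (q + 1) + (q + 1) + q) + 1 from by ring]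
      exact mem_S8_odd n (q + 1) (q + 1) (q + 1) q n₁ hn₁ hle

theorem stmt15 (n : ℕ) (hn : 0 < n) :
    Sfull 8 n ∧
      ∀ T : ℤ, T % 2 = (n : ℤ) % 2 → T ^ 2 < 8 * (n : ℤ) → T ∈ S 8 n := by
  constructor
  · intro T h1 h2
    exact main8 n T h1 (by push_cast at h2 ⊢; linarith)
  · intro T h1 h2
    exact main8 n T h1 h2
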